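/- Let f : (ℤ/mℤ)^n → ℚ be an n-cocycle of the Yang–Baxter cochain complex of the cyclic biquandle C_m (δ^n f = 0) whose shift-average vanishes, i.e. Σ_{i=0}^{m−1} S^i f = 0. Then f is a coboundary: there exists an (n−1)-cochain g with δ^{n−1} g = f. (Equivalently, the complement (1−P) of the shift-averaging projection P yields an acyclic subcomplex of the rational Yang–Baxter cochain complex of C_m.) -/

import Mathlib

/-- The `i`-th left face map of the set-theoretic Yang–Baxter (co)chain complex of the
cyclic biquandle `C_m = ℤ/mℤ` (with `R(a,b) = (b+1, a-1)`): it drops the `i`-th coordinate,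
subtracting `1` from all earlier coordinates. -/
def dl (m n : ℕ) (i : Fin (n + 1)) (x : Fin (n + 1) → ZMod m) : Fin n → ZMod m :=
  fun j => if (j : ℕ) < (i : ℕ) then x j.castSucc - 1 else x j.succ

/-- The `i`-th right face map: it drops the `i`-th coordinate, adding `1` to all later
coordinates. -/
def dr (m n : ℕ) (i : Fin (n + 1)) (x : Fin (n + 1) → ZMod m) : Fin n → ZMod m :=
  fun j => if (j : ℕ) < (i : ℕ) then x j.castSucc else x j.succ + 1

/-- The Yang–Baxter coboundary `δⁿ` of the cyclic biquandle `C_m` with coefficients in an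
abelian group `A`:
`(δⁿ f)(x₁,…,x_{n+1}) = Σᵢ (−1)^{i−1} [f(x₁−1,…,x_{i−1}−1,x_{i+1},…) − f(x₁,…,x_{i−1},x_{i+1}+1,…)]`. -/
def delta {A : Type*} [AddCommGroup A] (m n : ℕ) (f : (Fin n → ZMod m) → A) :
    (Fin (n + 1) → ZMod m) → A :=
  fun x => ∑ i : Fin (n + 1), (-1 : ℤ) ^ (i : ℕ) • (f (dl m n i x) - f (dr m n i x))

/-- The diagonal shift operator `S` on cochains: `(Sf)(x₁,…,x_k) = f(x₁−1,…,x_k−1)`. -/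
def shiftC {A : Type*} (m k : ℕ) (f : (Fin k → ZMod m) → A) : (Fin k → ZMod m) → A :=
  fun x => f fun j => x j - 1

/-- The "left-face only" coboundary. -/
def dop (m k : ℕ) (h : (Fin k → ZMod m) → ℚ) : (Fin (k + 1) → ZMod m) → ℚ :=
  fun x => ∑ i : Fin (k + 1), (-1 : ℚ) ^ (i : ℕ) * h (dl m k i x)

lemma dr_eq_dl (m k : ℕ) (i : Fin (k + 1)) (x : Fin (k + 1) → ZMod m) :
    dr m k i x = fun j => dl m k i x j + 1 := by
  funext j; simp only [dl, dr]; split <;> ring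

lemma delta_eq_dop (m k : ℕ) (h : (Fin k → ZMod m) → ℚ) :
    delta m k h = dop m k (fun z => h z - h (fun j => z j + 1)) := by
  funext x
  unfold delta dop
  refine Finset.sum_congr rfl fun i _ => ?_
  rw [dr_eq_dl, zsmul_eq_mul]
  push_cast
  ring

lemma dl_sub (m n : ℕ) (i : Fin (n + 1)) (x : Fin (n + 1) → ZMod m) (c : ZMod m) :
    dl m n i (fun j => x j - c) = fun j => dl m n i x j - c := by
  funext j; simp only [dl]; split <;> ring

lemma dl_castSucc_snoc (m n : ℕ) (i : Fin (n + 1)) (x : Fin (n + 1) → ZMod m) (a : ZMod m) :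
    dl m (n + 1) i.castSucc (Fin.snoc x a) = Fin.snoc (dl m n i x) a := by
  funext j
  refine Fin.lastCases ?_ ?_ j
  · have h : ¬ (n < (i : ℕ)) := by omega
    simp [dl, h, Fin.succ_last, Fin.snoc_last]
  · intro j'
    simp only [dl, Fin.coe_castSucc, Fin.snoc_castSucc, Fin.succ_castSucc]

lemma dl_last_snoc (m n : ℕ) (x : Fin (n + 1) → ZMod m) (a : ZMod m) :
    dl m (n + 1) (Fin.last (n + 1)) (Fin.snoc x a) = fun j => x j - 1 := by
  funext j
  have hj : (j : ℕ) < ((Fin.last (n + 1) : Fin (n+2)) : ℕ) := by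
    simp [Fin.val_last]
    exact Nat.lt_succ_iff.mp j.isLt
  simp [dl, hj, Fin.snoc_castSucc]
  intro h; have := j.isLt; omega

lemma key (m n : ℕ) (u : (Fin (n + 1) → ZMod m) → ℚ) (a : ZMod m)
    (x : Fin (n + 1) → ZMod m) :
    dop m (n + 1) u (Fin.snoc x a)
      = dop m n (fun y => u (Fin.snoc y a)) x + (-1 : ℚ) ^ (n + 1) * u (fun j => x j - 1) := by
  unfold dop
  rw [Fin.sum_univ_castSucc]
  congr 1
  · refine Finset.sum_congr rfl fun i _ => ?_
    rw [dl_castSucc_snoc]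
    simp [Fin.coe_castSucc]
  · rw [dl_last_snoc]
    simp [Fin.val_last]

lemma tele (m : ℕ) (hm : 1 ≤ m) (G : ℕ → ℚ) (hper : G m = G 0)
    (hsum : ∑ j ∈ Finset.range m, G j = 0) :
    ∑ j ∈ Finset.range m, ((m : ℚ) - 1 - j) / m * (G j - G (j + 1)) = G 0 := by
  have hm0 : (m : ℚ) ≠ 0 := Nat.cast_ne_zero.mpr (by omega)
  have h1 : ∀ j ∈ Finset.range m, ((m : ℚ) - 1 - j) / m * (G j - G (j + 1))
      = ((fun j : ℕ => ((m : ℚ) - j) / m * G j) j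
          - (fun j : ℕ => ((m : ℚ) - j) / m * G j) (j + 1))
        - 1 / m * G j := by
    intro j _
    simp only
    push_cast
    field_simp
    ring
  rw [Finset.sum_congr rfl h1, Finset.sum_sub_distrib,
    Finset.sum_range_sub' (fun j : ℕ => ((m : ℚ) - j) / m * G j), ← Finset.mul_sum, hsum]
  simp only [Nat.cast_zero, sub_zero, mul_zero, sub_self, zero_mul, hper]
  field_simp
  ring

/-- an `n`-cocycle `f` (with rational coefficients) of the Yang–Baxter cochain
complex of the cyclic biquandle `C_m` whose shift-average vanishes, `Σ_{i=0}^{m−1} Sⁱf = 0`,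
is a coboundary. (The `n`-cochains, `n ≥ 1`, are realized as degree `n+1`-cochains with
`n : ℕ` arbitrary.) -/
theorem cocycle_with_vanishing_shift_average_is_coboundary (m n : ℕ) (hm : 1 ≤ m)
    (f : (Fin (n + 1) → ZMod m) → ℚ) (hf : delta m (n + 1) f = 0)
    (hav : (fun x => ∑ i ∈ Finset.range m, f fun j => x j - (i : ZMod m)) =
      (0 : (Fin (n + 1) → ZMod m) → ℚ)) :
    ∃ g : (Fin n → ZMod m) → ℚ, delta m n g = f := by
  haveI : NeZero m := ⟨by omega⟩
  have hm0 : (m : ℚ) ≠ 0 := Nat.cast_ne_zero.mpr (by omega)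
  -- u = (1 - T) f
  set u : (Fin (n + 1) → ZMod m) → ℚ :=
    fun z => f z - f (fun j => z j + 1) with hu
  -- u is a d-cocycle
  have hdu : ∀ z, dop m (n + 1) u z = 0 := by
    intro z
    have h1 := congrFun (delta_eq_dop m (n + 1) f) z
    have h2 := congrFun hf z
    rw [h2] at h1
    exact h1.symm
  -- the homotopy output v, averaged over the inserted last coordinate
  set v : (Fin n → ZMod m) → ℚ :=
    fun y => (-1 : ℚ) ^ (n + 1) / m * ∑ a : ZMod m, u (Fin.snoc y a) with hv
  have hpow : (-1 : ℚ) ^ (n + 1) * (-1 : ℚ) ^ (n + 1) = 1 := by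
    rw [← pow_add]
    exact Even.neg_one_pow ⟨n + 1, by ring⟩
  -- C1 : dop v = (1 - S) f
  have hC1 : ∀ x : Fin (n + 1) → ZMod m,
      dop m n v x = f x - f (fun j => x j - 1) := by
    intro x
    have c1 : dop m n v x
        = ∑ i : Fin (n + 1), ∑ a : ZMod m,
            (-1 : ℚ) ^ (n + 1) / m * ((-1 : ℚ) ^ (i : ℕ) * u (Fin.snoc (dl m n i x) a)) := by
      unfold dop
      refine Finset.sum_congr rfl fun i _ => ?_
      simp only [hv, Finset.mul_sum]
      exact Finset.sum_congr rfl fun a _ => by ring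
    rw [c1, Finset.sum_comm]
    have c2 : ∀ a : ZMod m,
        (∑ i : Fin (n + 1),
          (-1 : ℚ) ^ (n + 1) / m * ((-1 : ℚ) ^ (i : ℕ) * u (Fin.snoc (dl m n i x) a)))
        = (-1 : ℚ) ^ (n + 1) / m *
            (dop m (n + 1) u (Fin.snoc x a) - (-1 : ℚ) ^ (n + 1) * u (fun j => x j - 1)) := by
      intro a
      rw [← Finset.mul_sum]
      congr 1
      show dop m n (fun y => u (Fin.snoc y a)) x = _
      rw [key m n u a x]
      ring
    rw [Finset.sum_congr rfl fun a _ => c2 a]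
    have c3 : ∀ a : ZMod m,
        (-1 : ℚ) ^ (n + 1) / m *
            (dop m (n + 1) u (Fin.snoc x a) - (-1 : ℚ) ^ (n + 1) * u (fun j => x j - 1))
        = -(1 / m) * u (fun j => x j - 1) := by
      intro a
      rw [hdu]
      linear_combination (-(u fun j => x j - 1) / m) * hpow
    rw [Finset.sum_congr rfl fun a _ => c3 a, Finset.sum_const, Finset.card_univ,
      ZMod.card, nsmul_eq_mul]
    have c4 : (fun j => x j - 1 + 1) = x := by funext j; ring
    simp only [hu, c4]
    field_simp
    ring
  -- g2 : inverts (1 - S) using the weights (m-1-k)/m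
  set g2 : (Fin n → ZMod m) → ℚ :=
    fun y => ∑ k ∈ Finset.range m, ((m : ℚ) - 1 - k) / m * v (fun t => y t - (k : ZMod m))
    with hg2
  -- C2 : dop g2 = f
  have hC2 : ∀ x : Fin (n + 1) → ZMod m, dop m n g2 x = f x := by
    intro x
    have c1 : dop m n g2 x
        = ∑ i : Fin (n + 1), ∑ k ∈ Finset.range m,
            ((m : ℚ) - 1 - k) / m *
              ((-1 : ℚ) ^ (i : ℕ) * v (dl m n i (fun t => x t - (k : ZMod m)))) := by
      unfold dop
      refine Finset.sum_congr rfl fun i _ => ?_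
      simp only [hg2, Finset.mul_sum]
      refine Finset.sum_congr rfl fun k _ => ?_
      rw [dl_sub]
      ring
    rw [c1, Finset.sum_comm]
    have c2 : ∀ k ∈ Finset.range m,
        (∑ i : Fin (n + 1), ((m : ℚ) - 1 - k) / m *
            ((-1 : ℚ) ^ (i : ℕ) * v (dl m n i (fun t => x t - (k : ZMod m)))))
        = ((m : ℚ) - 1 - k) / m *
            ((fun k : ℕ => f (fun t => x t - (k : ZMod m))) k
              - (fun k : ℕ => f (fun t => x t - (k : ZMod m))) (k + 1)) := by
      intro k _
      rw [← Finset.mul_sum]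
      simp only
      congr 1
      have h1 : (∑ i : Fin (n + 1),
          (-1 : ℚ) ^ (i : ℕ) * v (dl m n i (fun t => x t - (k : ZMod m))))
          = dop m n v (fun t => x t - (k : ZMod m)) := rfl
      rw [h1, hC1]
      have h2 : (fun j => x j - (k : ZMod m) - 1) =
          (fun t => x t - ((k + 1 : ℕ) : ZMod m)) := by
        funext t; push_cast; ring
      rw [h2]
    rw [Finset.sum_congr rfl c2,
      tele m hm (fun k : ℕ => f (fun t => x t - (k : ZMod m)))
        (by simp [ZMod.natCast_self]) (by simpa using congrFun hav x)]
    simp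
  -- sum over shifts of v vanishes
  have hVsum : ∀ z : Fin n → ZMod m,
      ∑ j ∈ Finset.range m, v (fun t => z t + (j : ZMod m)) = 0 := by
    intro z
    have h1 : ∀ j : ℕ, v (fun t => z t + (j : ZMod m))
        = (-1 : ℚ) ^ (n + 1) / m *
            ∑ b : ZMod m, u (fun t => (Fin.snoc z b : Fin (n + 1) → ZMod m) t + (j : ZMod m)) := by
      intro j
      simp only [hv]
      congr 1
      refine Fintype.sum_equiv (Equiv.subRight ((j : ZMod m))) _ _ fun a => ?_
      congr 1
      funext t
      refine Fin.lastCases ?_ ?_ t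
      · simp [Equiv.subRight]
      · intro t'
        simp
    rw [Finset.sum_congr rfl fun j _ => h1 j, ← Finset.mul_sum, Finset.sum_comm]
    have h2 : ∀ b : ZMod m,
        ∑ j ∈ Finset.range m,
          u (fun t => (Fin.snoc z b : Fin (n + 1) → ZMod m) t + (j : ZMod m)) = 0 := by
      intro b
      have h3 : ∀ j : ℕ, u (fun t => (Fin.snoc z b : Fin (n + 1) → ZMod m) t + (j : ZMod m))
          = (fun j : ℕ => f (fun t => (Fin.snoc z b : Fin (n + 1) → ZMod m) t + (j : ZMod m))) j
            - (fun j : ℕ =>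
                f (fun t => (Fin.snoc z b : Fin (n + 1) → ZMod m) t + (j : ZMod m))) (j + 1) := by
        intro j
        simp only [hu]
        have e : (fun t => (Fin.snoc z b : Fin (n + 1) → ZMod m) t + (j : ZMod m) + 1)
            = (fun t => (Fin.snoc z b : Fin (n + 1) → ZMod m) t + ((j + 1 : ℕ) : ZMod m)) := by
          funext t; push_cast; ring
        rw [e]
      rw [Finset.sum_congr rfl fun j _ => h3 j,
        Finset.sum_range_sub' (fun j : ℕ =>
          f (fun t => (Fin.snoc z b : Fin (n + 1) → ZMod m) t + (j : ZMod m)))]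
      simp [ZMod.natCast_self]
    rw [Finset.sum_congr rfl fun b _ => h2 b]
    simp
  -- C3 : sum over shifts of g2 vanishes
  have hC3 : ∀ y : Fin n → ZMod m,
      ∑ j ∈ Finset.range m, g2 (fun t => y t + (j : ZMod m)) = 0 := by
    intro y
    have h1 : ∀ j : ℕ, g2 (fun t => y t + (j : ZMod m))
        = ∑ k ∈ Finset.range m, ((m : ℚ) - 1 - k) / m *
            v (fun t => (y t - (k : ZMod m)) + (j : ZMod m)) := by
      intro j
      simp only [hg2]
      refine Finset.sum_congr rfl fun k _ => ?_
      have harg : (fun t => y t + (j : ZMod m) - (k : ZMod m))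
          = (fun t => (y t - (k : ZMod m)) + (j : ZMod m)) := by
        funext t; ring
      rw [harg]
    rw [Finset.sum_congr rfl fun j _ => h1 j, Finset.sum_comm]
    have h2 : ∀ k : ℕ,
        (∑ j ∈ Finset.range m, ((m : ℚ) - 1 - k) / m *
            v (fun t => (y t - (k : ZMod m)) + (j : ZMod m)))
        = 0 := by
      intro k
      rw [← Finset.mul_sum, hVsum]
      ring
    rw [Finset.sum_congr rfl fun k _ => h2 k]
    simp
  -- define g inverting (1 - T)
  refine ⟨fun y => ∑ j ∈ Finset.range m,
      ((m : ℚ) - 1 - j) / m * g2 (fun t => y t + (j : ZMod m)), ?_⟩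
  set g : (Fin n → ZMod m) → ℚ :=
    fun y => ∑ j ∈ Finset.range m,
      ((m : ℚ) - 1 - j) / m * g2 (fun t => y t + (j : ZMod m)) with hg
  -- C4 : (1 - T) g = g2
  have hC4 : ∀ y : Fin n → ZMod m, g y - g (fun t => y t + 1) = g2 y := by
    intro y
    have h1 : g y - g (fun t => y t + 1)
        = ∑ j ∈ Finset.range m, ((m : ℚ) - 1 - j) / m *
            ((fun j : ℕ => g2 (fun t => y t + (j : ZMod m))) j
              - (fun j : ℕ => g2 (fun t => y t + (j : ZMod m))) (j + 1)) := by
      simp only [hg]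
      rw [← Finset.sum_sub_distrib]
      refine Finset.sum_congr rfl fun j _ => ?_
      beta_reduce
      have h2 : (fun t => y t + 1 + (j : ZMod m)) =
          (fun t => y t + ((j + 1 : ℕ) : ZMod m)) := by
        funext t; push_cast; ring
      rw [h2]
      ring
    rw [h1, tele m hm (fun j : ℕ => g2 (fun t => y t + (j : ZMod m)))
        (by simp [ZMod.natCast_self]) (hC3 y)]
    simp
  -- conclude
  funext x
  rw [congrFun (delta_eq_dop m n g) x]
  have h1 : (fun z => g z - g (fun j => z j + 1)) = g2 := funext hC4
  rw [h1]
  exact hC2 x
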